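/- Suppose K·Z'(θ) < 0 for all θ ∈ [0,2π] and Z(θ) ≠ 0 for all θ. If ρ(2π, t̄) = ρ(θ, 0) · exp( −∫_θ^{2π} [J₀/(ω + K·Z(s)·J₀)] · K·Z'(s) ds ) for some flux values J₀ > 0 along the characteristic from (θ,0) to (2π,t̄), and the initial density satisfies ρ(θ,0) < 1/(K·Z(θ)) with K·Z(2π) > 0, then ρ(2π, t̄) < 1/(K·Z(2π)). -/

import Mathlib

open Real MeasureTheory Set

/-- Key estimate of Proposition 2 (case `K·Z(2π) > 0`): if `K·Z' < 0` on
`[0,2π]`, `Z ≠ 0`, `ρ(2π,t̄)` is given by the exponential formula with a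
strictly positive flux `J` along the characteristic, and the initial density
satisfies `ρ(θ,0) < 1/(K·Z(θ))`, then `ρ(2π,t̄) < 1/(K·Z(2π))`. -/
theorem absorption_avoidance_bound
    (Z Z' : ℝ → ℝ) (K ω : ℝ) (hω : 0 < ω)
    (hZ : ∀ s, HasDerivAt Z (Z' s) s) (hZ'c : Continuous Z')
    (hKZ' : ∀ s ∈ Icc (0:ℝ) (2 * π), K * Z' s < 0)
    (hZne : ∀ s ∈ Icc (0:ℝ) (2 * π), Z s ≠ 0)
    (hKZ2π : 0 < K * Z (2 * π))
    (θ : ℝ) (hθ : θ ∈ Icc (0:ℝ) (2 * π))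
    (J : ℝ → ℝ) (hJ : ∀ s, 0 < J s) (hJc : Continuous J)
    (ρθ0 ρ2π : ℝ)
    (hform : ρ2π = ρθ0 *
      Real.exp (-∫ s in θ..(2 * π), J s / (ω + K * Z s * J s) * (K * Z' s)))
    (hinit : ρθ0 < 1 / (K * Z θ)) :
    ρ2π < 1 / (K * Z (2 * π)) := by
  have hπ : (0:ℝ) ≤ 2 * π := by positivity
  have hab : θ ≤ 2 * π := hθ.2
  have h2π : (2 * π : ℝ) ∈ Icc (0:ℝ) (2 * π) := ⟨hπ, le_refl _⟩
  have hK : K ≠ 0 := by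
    intro h
    have := hKZ' 0 ⟨le_refl _, hπ⟩
    rw [h] at this; simp at this
  have hZc : Continuous Z := by
    rw [continuous_iff_continuousAt]
    exact fun s => (hZ s).continuousAt
  -- K*Z is strictly antitone on [0, 2π]
  have hanti : StrictAntiOn (fun s => K * Z s) (Icc (0:ℝ) (2 * π)) := by
    apply strictAntiOn_of_deriv_neg (convex_Icc _ _)
      (continuous_const.mul hZc).continuousOn
    intro x hx
    rw [interior_Icc] at hx
    have hd : HasDerivAt (fun s => K * Z s) (K * Z' x) x := (hZ x).const_mul K
    rw [show ((fun x => K) * Z) = (fun s => K * Z s) from rfl, hd.deriv]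
    exact hKZ' x ⟨le_of_lt hx.1, le_of_lt hx.2⟩
  have hsub : Icc θ (2 * π) ⊆ Icc (0:ℝ) (2 * π) := Icc_subset_Icc hθ.1 le_rfl
  have hKZpos : ∀ s ∈ Icc θ (2 * π), 0 < K * Z s := by
    intro s hs
    have hs' := hsub hs
    rcases eq_or_lt_of_le hs.2 with h | h
    · rw [h]; exact hKZ2π
    · exact lt_trans hKZ2π (hanti hs' h2π h)
  have hKZθpos : 0 < K * Z θ := hKZpos θ ⟨le_rfl, hab⟩
  have huIcc : uIcc θ (2 * π) = Icc θ (2 * π) := uIcc_of_le hab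
  -- denominator positivity
  have hDpos : ∀ s ∈ Icc θ (2 * π), 0 < ω + K * Z s * J s := fun s hs =>
    add_pos hω (mul_pos (hKZpos s hs) (hJ s))
  -- pointwise comparison : Z'/Z ≤ integrand
  have hpt : ∀ s ∈ Icc θ (2 * π),
      Z' s / Z s ≤ J s / (ω + K * Z s * J s) * (K * Z' s) := by
    intro s hs
    have hP := hKZpos s hs
    have hD := hDpos s hs
    have hdivle : J s / (ω + K * Z s * J s) ≤ 1 / (K * Z s) := by
      rw [div_le_div_iff₀ hD hP]
      nlinarith
    have hg : Z' s / Z s = 1 / (K * Z s) * (K * Z' s) := by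
      rw [one_div, inv_mul_eq_div, mul_div_mul_left _ _ hK]
    rw [hg]
    have hKZ'neg := hKZ' s (hsub hs)
    calc 1 / (K * Z s) * (K * Z' s)
        = (K * Z' s) * (1 / (K * Z s)) := by ring
      _ ≤ (K * Z' s) * (J s / (ω + K * Z s * J s)) :=
          mul_le_mul_of_nonpos_left hdivle (le_of_lt hKZ'neg)
      _ = J s / (ω + K * Z s * J s) * (K * Z' s) := by ring
  -- integrability
  have hcontf : ContinuousOn (fun s => J s / (ω + K * Z s * J s) * (K * Z' s))
      (Icc θ (2 * π)) := by
    apply ContinuousOn.mul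
    · apply ContinuousOn.div hJc.continuousOn
        ((continuous_const.add ((continuous_const.mul hZc).mul hJc)).continuousOn)
      exact fun s hs => ne_of_gt (hDpos s hs)
    · exact (continuous_const.mul hZ'c).continuousOn
  have hcontg : ContinuousOn (fun s => Z' s / Z s) (Icc θ (2 * π)) := by
    apply ContinuousOn.div hZ'c.continuousOn hZc.continuousOn
    exact fun s hs => hZne s (hsub hs)
  have hintf : IntervalIntegrable (fun s => J s / (ω + K * Z s * J s) * (K * Z' s))
      volume θ (2 * π) := (hcontf.mono (by rw [huIcc])).intervalIntegrable
  have hintg : IntervalIntegrable (fun s => Z' s / Z s) volume θ (2 * π) :=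
    (hcontg.mono (by rw [huIcc])).intervalIntegrable
  -- integral comparison
  have hmono : (∫ s in θ..(2 * π), Z' s / Z s)
      ≤ ∫ s in θ..(2 * π), J s / (ω + K * Z s * J s) * (K * Z' s) :=
    intervalIntegral.integral_mono_on hab hintg hintf hpt
  -- compute ∫ Z'/Z
  have hlog : (∫ s in θ..(2 * π), Z' s / Z s)
      = Real.log (Z (2 * π)) - Real.log (Z θ) := by
    apply intervalIntegral.integral_eq_sub_of_hasDerivAt (f := fun x => Real.log (Z x))
    · intro s hs
      rw [huIcc] at hs
      exact (hZ s).log (hZne s (hsub hs))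
    · exact hintg
  -- bound the exponential
  have hexp : Real.exp (-∫ s in θ..(2 * π), J s / (ω + K * Z s * J s) * (K * Z' s))
      ≤ (K * Z θ) / (K * Z (2 * π)) := by
    have h1 : (-∫ s in θ..(2 * π), J s / (ω + K * Z s * J s) * (K * Z' s))
        ≤ Real.log (Z θ) - Real.log (Z (2 * π)) := by
      rw [hlog] at hmono; linarith
    calc Real.exp (-∫ s in θ..(2 * π), J s / (ω + K * Z s * J s) * (K * Z' s))
        ≤ Real.exp (Real.log (Z θ) - Real.log (Z (2 * π))) := Real.exp_le_exp.mpr h1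
      _ = |Z θ| / |Z (2 * π)| := by
          rw [Real.exp_sub, ← Real.log_abs (Z θ), ← Real.log_abs (Z (2 * π)),
            Real.exp_log (abs_pos.mpr (hZne θ hθ)),
            Real.exp_log (abs_pos.mpr (hZne _ h2π))]
      _ = (K * Z θ) / (K * Z (2 * π)) := by
          rw [← abs_of_pos hKZθpos, ← abs_of_pos hKZ2π, abs_mul, abs_mul,
            mul_div_mul_left _ _ (abs_ne_zero.mpr hK)]
  set E := Real.exp (-∫ s in θ..(2 * π), J s / (ω + K * Z s * J s) * (K * Z' s)) with hE
  have hEpos : 0 < E := Real.exp_pos _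
  rcases le_or_gt ρθ0 0 with hρ | hρ
  · have : ρ2π ≤ 0 := by
      rw [hform]; exact mul_nonpos_of_nonpos_of_nonneg hρ (le_of_lt hEpos)
    exact lt_of_le_of_lt this (by positivity)
  · rw [hform]
    calc ρθ0 * E ≤ ρθ0 * ((K * Z θ) / (K * Z (2 * π))) :=
          mul_le_mul_of_nonneg_left hexp (le_of_lt hρ)
      _ < (1 / (K * Z θ)) * ((K * Z θ) / (K * Z (2 * π))) :=
          mul_lt_mul_of_pos_right hinit (div_pos hKZθpos hKZ2π)
      _ = 1 / (K * Z (2 * π)) := by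
          field_simp [hZne θ hθ]
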